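/- Suppose an n×N matrix Φ with unit columns has RIP parameter of order m equal to ε (i.e., ε is the least parameter for which the RIP of order m holds). Then for any δ ∈ (0,1) and any k with m ≤ k ≤ 1 + (m-1)δ/ε, Φ satisfies the RIP of order k with parameter δ. -/

import Mathlib

open Finset

/-- `Φ` satisfies the Restricted Isometry Property of order `k` with parameter `δ`. -/
def RIP {m N : Type*} [Fintype m] [Fintype N] [DecidableEq N]
    (Φ : Matrix m N ℂ) (k : ℕ) (δ : ℝ) : Prop :=
  ∀ x : N → ℂ, (Finset.univ.filter fun i => x i ≠ 0).card ≤ k →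
    (1 - δ) * ∑ i, ‖x i‖ ^ 2 ≤ ∑ a, ‖Φ.mulVec x a‖ ^ 2 ∧
      ∑ a, ‖Φ.mulVec x a‖ ^ 2 ≤ (1 + δ) * ∑ i, ‖x i‖ ^ 2

variable {α : Type*} [DecidableEq α]

lemma count_supersets (S u : Finset α) (hu : u ⊆ S) (m : ℕ) (hm : u.card ≤ m) :
    ((powersetCard m S).filter (fun T => u ⊆ T)).card = (S.card - u.card).choose (m - u.card) := by
  have : (S.card - u.card) = (S \ u).card := (card_sdiff_of_subset hu).symm
  rw [this, ← Finset.card_powersetCard (m - u.card) (S \ u)]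
  apply Finset.card_bij' (fun T _ => T \ u) (fun U _ => U ∪ u)
  · intro T hT
    simp only [mem_filter, mem_powersetCard] at hT ⊢
    exact ⟨sdiff_subset_sdiff hT.1.1 le_rfl, by rw [card_sdiff_of_subset hT.2, hT.1.2]⟩
  · intro U hU
    rw [mem_powersetCard] at hU
    have hdisj : Disjoint U u := disjoint_of_subset_left hU.1 (sdiff_disjoint)
    simp only [mem_filter, mem_powersetCard]
    refine ⟨⟨union_subset (hU.1.trans sdiff_subset) hu, ?_⟩, subset_union_right⟩
    rw [card_union_of_disjoint hdisj, hU.2]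
    omega
  · intro T hT
    simp only [mem_filter, mem_powersetCard] at hT
    exact sdiff_union_of_subset hT.2
  · intro U hU
    rw [mem_powersetCard] at hU
    exact union_sdiff_cancel_right (disjoint_of_subset_left hU.1 sdiff_disjoint)

lemma sum_powersetCard_offDiag {β : Type*} [AddCommMonoid β] (S : Finset α) (m : ℕ) (F : α × α → β) :
    ∑ T ∈ powersetCard m S, ∑ p ∈ T.offDiag, F p
      = ∑ p ∈ S.offDiag, (((powersetCard m S).filter fun T => {p.1, p.2} ⊆ T).card) • F p := by
  have h1 : ∀ T ∈ powersetCard m S,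
      ∑ p ∈ T.offDiag, F p = ∑ p ∈ S.offDiag.filter (fun p => {p.1, p.2} ⊆ T), F p := by
    intro T hT
    rw [mem_powersetCard] at hT
    congr 1
    ext p
    simp only [mem_offDiag, mem_filter, insert_subset_iff, singleton_subset_iff]
    constructor
    · exact fun h => ⟨⟨hT.1 h.1, hT.1 h.2.1, h.2.2⟩, h.1, h.2.1⟩
    · exact fun h => ⟨h.2.1, h.2.2, h.1.2.2⟩
  rw [Finset.sum_congr rfl h1]
  simp_rw [sum_filter]
  rw [Finset.sum_comm]
  congr 1
  ext p
  rw [← Finset.sum_filter, Finset.sum_const]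

lemma sum_powersetCard_mem {β : Type*} [AddCommMonoid β] (S : Finset α) (m : ℕ) (F : α → β) :
    ∑ T ∈ powersetCard m S, ∑ i ∈ T, F i
      = ∑ i ∈ S, (((powersetCard m S).filter fun T => {i} ⊆ T).card) • F i := by
  have h1 : ∀ T ∈ powersetCard m S,
      ∑ i ∈ T, F i = ∑ i ∈ S.filter (fun i => {i} ⊆ T), F i := by
    intro T hT
    rw [mem_powersetCard] at hT
    congr 1
    ext i
    simp only [mem_filter, singleton_subset_iff]
    exact ⟨fun h => ⟨hT.1 h, h⟩, fun h => h.2⟩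
  rw [Finset.sum_congr rfl h1]
  simp_rw [sum_filter]
  rw [Finset.sum_comm]
  congr 1
  ext i
  rw [← Finset.sum_filter, Finset.sum_const]

lemma triple_sum_comm {β γ₁ γ₂ γ₃ : Type*} [AddCommMonoid β] (s : Finset γ₁) (t : Finset γ₂)
    (u : Finset γ₃) (G : γ₁ → γ₂ → γ₃ → β) :
    ∑ a ∈ s, ∑ i ∈ t, ∑ j ∈ u, G a i j = ∑ i ∈ t, ∑ j ∈ u, ∑ a ∈ s, G a i j :=
  Finset.sum_comm.trans (Finset.sum_congr rfl fun _ _ => Finset.sum_comm)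

lemma quad_expand {n N : ℕ} (Φ : Matrix (Fin n) (Fin N) ℂ) (x : Fin N → ℂ) :
    (∑ a, ‖Φ.mulVec x a‖ ^ 2 : ℝ) =
      (∑ i, ∑ j, (starRingEnd ℂ) (x i) * x j * ∑ a, (starRingEnd ℂ) (Φ a i) * Φ a j).re := by
  have key : ∀ z : ℂ, ‖z‖ ^ 2 = ((starRingEnd ℂ) z * z).re := by
    intro z
    rw [mul_comm, Complex.mul_conj]
    simp only [Complex.normSq_eq_norm_sq, ← Complex.ofReal_pow,
      Complex.ofReal_re]
  have hc : ∑ a, (starRingEnd ℂ) (Φ.mulVec x a) * Φ.mulVec x a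
      = ∑ i, ∑ j, (starRingEnd ℂ) (x i) * x j * ∑ a, (starRingEnd ℂ) (Φ a i) * Φ a j := by
    simp only [Matrix.mulVec, dotProduct, map_sum, map_mul, Finset.sum_mul,
      Finset.mul_sum]
    conv_lhs => rw [triple_sum_comm]
    conv_rhs => rw [Finset.sum_comm]
    refine Finset.sum_congr rfl fun i _ => Finset.sum_congr rfl fun j _ =>
      Finset.sum_congr rfl fun a _ => by ring
  rw [← hc, Complex.re_sum]
  exact Finset.sum_congr rfl fun a _ => key _

lemma quad_support {n N : ℕ} (Φ : Matrix (Fin n) (Fin N) ℂ)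
    (hunit : ∀ j, ∑ a, ‖Φ a j‖ ^ 2 = 1) (x : Fin N → ℂ) (S : Finset (Fin N))
    (hx : ∀ i ∉ S, x i = 0) :
    (∑ a, ‖Φ.mulVec x a‖ ^ 2 : ℝ) = ∑ i ∈ S, ‖x i‖ ^ 2 +
      (∑ p ∈ S.offDiag,
        (starRingEnd ℂ) (x p.1) * x p.2 * ∑ a, (starRingEnd ℂ) (Φ a p.1) * Φ a p.2).re := by
  have hzsq : ∀ z : ℂ, (starRingEnd ℂ) z * z = ((‖z‖ ^ 2 : ℝ) : ℂ) := by
    intro z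
    rw [mul_comm, Complex.mul_conj]
    simp [Complex.normSq_eq_norm_sq]
  have hgii : ∀ i : Fin N, (∑ a, (starRingEnd ℂ) (Φ a i) * Φ a i) = 1 := by
    intro i
    simp_rw [hzsq]
    rw [← Complex.ofReal_sum, hunit i, Complex.ofReal_one]
  set f : Fin N → Fin N → ℂ := fun i j =>
    (starRingEnd ℂ) (x i) * x j * ∑ a, (starRingEnd ℂ) (Φ a i) * Φ a j with hf
  rw [quad_expand]
  have h1 : ∑ i, ∑ j, f i j = ∑ i ∈ S, ∑ j ∈ S, f i j := by
    rw [← Finset.sum_subset (Finset.subset_univ S)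
      (fun i _ hi => by simp [hf, hx i hi])]
    refine Finset.sum_congr rfl fun i _ => ?_
    rw [← Finset.sum_subset (Finset.subset_univ S)
      (fun j _ hj => by simp [hf, hx j hj])]
  have h2 : ∑ i ∈ S, ∑ j ∈ S, f i j
      = ∑ i ∈ S, f i i + ∑ p ∈ S.offDiag, f p.1 p.2 := by
    rw [← Finset.sum_product', ← Finset.diag_union_offDiag,
      Finset.sum_union (Finset.disjoint_diag_offDiag _), Finset.sum_diag]
  have h3 : ∑ i ∈ S, f i i = ((∑ i ∈ S, ‖x i‖ ^ 2 : ℝ) : ℂ) := by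
    rw [Complex.ofReal_sum]
    refine Finset.sum_congr rfl fun i _ => ?_
    simp only [hf]
    rw [hgii i, mul_one, hzsq]
  show (∑ i, ∑ j, f i j).re = _
  rw [h1, h2, h3, Complex.add_re, Complex.ofReal_re]

lemma rip_offdiag_bound {n N m : ℕ} (Φ : Matrix (Fin n) (Fin N) ℂ)
    (hunit : ∀ j, ∑ a, ‖Φ a j‖ ^ 2 = 1) {ε : ℝ} (hrip : RIP Φ m ε)
    (x : Fin N → ℂ) (T : Finset (Fin N)) (hT : T.card ≤ m) :
    |(∑ p ∈ T.offDiag,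
        (starRingEnd ℂ) (x p.1) * x p.2 * ∑ a, (starRingEnd ℂ) (Φ a p.1) * Φ a p.2).re|
      ≤ ε * ∑ i ∈ T, ‖x i‖ ^ 2 := by
  set y : Fin N → ℂ := fun i => if i ∈ T then x i else 0 with hy
  have hy0 : ∀ i ∉ T, y i = 0 := fun i hi => by simp [hy, hi]
  have hsupp : (Finset.univ.filter fun i => y i ≠ 0).card ≤ m := by
    refine le_trans (Finset.card_le_card ?_) hT
    intro i hi
    rw [Finset.mem_filter] at hi
    by_contra h
    exact hi.2 (hy0 i h)
  have hSig : ∑ i, ‖y i‖ ^ 2 = ∑ i ∈ T, ‖x i‖ ^ 2 := by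
    rw [← Finset.sum_subset (Finset.subset_univ T) (fun i _ hi => by simp [hy0 i hi])]
    exact Finset.sum_congr rfl fun i hi => by simp [hy, hi]
  have hQ := quad_support Φ hunit y T hy0
  have hoff : (∑ p ∈ T.offDiag,
        (starRingEnd ℂ) (y p.1) * y p.2 * ∑ a, (starRingEnd ℂ) (Φ a p.1) * Φ a p.2)
      = ∑ p ∈ T.offDiag,
        (starRingEnd ℂ) (x p.1) * x p.2 * ∑ a, (starRingEnd ℂ) (Φ a p.1) * Φ a p.2 := by
    refine Finset.sum_congr rfl fun p hp => ?_
    rw [Finset.mem_offDiag] at hp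
    simp [hy, hp.1, hp.2.1]
  have hyT : ∑ i ∈ T, ‖y i‖ ^ 2 = ∑ i ∈ T, ‖x i‖ ^ 2 :=
    Finset.sum_congr rfl fun i hi => by simp [hy, hi]
  obtain ⟨hl, hr⟩ := hrip y hsupp
  rw [hSig] at hl hr
  rw [hQ, hoff, hyT] at hl hr
  have hx2 : (0:ℝ) ≤ ∑ i ∈ T, ‖x i‖ ^ 2 :=
    Finset.sum_nonneg fun i _ => sq_nonneg _
  rw [abs_le]
  constructor <;> nlinarith

lemma averaging {n N m : ℕ} (Φ : Matrix (Fin n) (Fin N) ℂ)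
    (hunit : ∀ j, ∑ a, ‖Φ a j‖ ^ 2 = 1) {ε : ℝ} (hrip : RIP Φ m ε)
    (hm : 2 ≤ m) (x : Fin N → ℂ) (S : Finset (Fin N)) (hms : m ≤ S.card) :
    ((S.card - 2).choose (m - 2) : ℝ) *
        |(∑ p ∈ S.offDiag,
          (starRingEnd ℂ) (x p.1) * x p.2 * ∑ a, (starRingEnd ℂ) (Φ a p.1) * Φ a p.2).re|
      ≤ ε * ((S.card - 1).choose (m - 1) : ℝ) * ∑ i ∈ S, ‖x i‖ ^ 2 := by
  set F : Fin N × Fin N → ℂ := fun p =>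
    (starRingEnd ℂ) (x p.1) * x p.2 * ∑ a, (starRingEnd ℂ) (Φ a p.1) * Φ a p.2 with hF
  have hcount2 : ∀ p ∈ S.offDiag,
      (((powersetCard m S).filter fun T => {p.1, p.2} ⊆ T).card) = (S.card - 2).choose (m - 2) := by
    intro p hp
    rw [Finset.mem_offDiag] at hp
    have hu : ({p.1, p.2} : Finset (Fin N)) ⊆ S :=
      Finset.insert_subset hp.1 (Finset.singleton_subset_iff.2 hp.2.1)
    have hcard : ({p.1, p.2} : Finset (Fin N)).card = 2 := Finset.card_pair hp.2.2
    rw [count_supersets S _ hu m (by rw [hcard]; exact hm), hcard]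
  have havg : ∑ T ∈ powersetCard m S, (∑ p ∈ T.offDiag, F p)
      = ((S.card - 2).choose (m - 2)) • ∑ p ∈ S.offDiag, F p := by
    rw [sum_powersetCard_offDiag, Finset.smul_sum]
    exact Finset.sum_congr rfl fun p hp => by rw [hcount2 p hp]
  have hcount1 : ∀ i ∈ S,
      (((powersetCard m S).filter fun T => {i} ⊆ T).card) = (S.card - 1).choose (m - 1) := by
    intro i hi
    rw [count_supersets S {i} (Finset.singleton_subset_iff.2 hi) m
      (by rw [Finset.card_singleton]; omega), Finset.card_singleton]
  have hsum1 : ∑ T ∈ powersetCard m S, ∑ i ∈ T, ‖x i‖ ^ 2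
      = ((S.card - 1).choose (m - 1) : ℝ) * ∑ i ∈ S, ‖x i‖ ^ 2 := by
    rw [sum_powersetCard_mem, Finset.mul_sum]
    refine Finset.sum_congr rfl fun i hi => ?_
    rw [hcount1 i hi, nsmul_eq_mul]
  have hre : ∑ T ∈ powersetCard m S, (∑ p ∈ T.offDiag, F p).re
      = ((S.card - 2).choose (m - 2) : ℝ) * (∑ p ∈ S.offDiag, F p).re := by
    rw [← Complex.re_sum, havg, nsmul_eq_mul]
    simp [Complex.mul_re]
  calc ((S.card - 2).choose (m - 2) : ℝ) * |(∑ p ∈ S.offDiag, F p).re|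
      = |((S.card - 2).choose (m - 2) : ℝ) * (∑ p ∈ S.offDiag, F p).re| := by
        rw [abs_mul, Nat.abs_cast]
    _ = |∑ T ∈ powersetCard m S, (∑ p ∈ T.offDiag, F p).re| := by rw [hre]
    _ ≤ ∑ T ∈ powersetCard m S, |(∑ p ∈ T.offDiag, F p).re| := Finset.abs_sum_le_sum_abs _ _
    _ ≤ ∑ T ∈ powersetCard m S, ε * ∑ i ∈ T, ‖x i‖ ^ 2 := by
        refine Finset.sum_le_sum fun T hT => ?_
        rw [Finset.mem_powersetCard] at hT
        exact rip_offdiag_bound Φ hunit hrip x T hT.2.le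
    _ = ε * ((S.card - 1).choose (m - 1) : ℝ) * ∑ i ∈ S, ‖x i‖ ^ 2 := by
        rw [← Finset.mul_sum, hsum1, mul_assoc]

/-- Correctness of the lazy algorithm: if ε is the least RIP parameter
of order m of a matrix Φ with unit columns, then for any δ ∈ (0,1) and any k with
m ≤ k ≤ 1 + (m-1)δ/ε, Φ satisfies the RIP of order k with parameter δ. -/
theorem lazy_algorithm_correct {n N m k : ℕ} (Φ : Matrix (Fin n) (Fin N) ℂ)
    (hunit : ∀ j, ∑ a, ‖Φ a j‖ ^ 2 = 1)
    (ε δ : ℝ) (hε : IsLeast {δ' : ℝ | RIP Φ m δ'} ε)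
    (hδ0 : 0 < δ) (hδ1 : δ < 1)
    (hmk : m ≤ k) (hkb : (k : ℝ) ≤ 1 + ((m : ℝ) - 1) * δ / ε) :
    RIP Φ k δ := by
  rcases Nat.eq_zero_or_pos N with hN | hN
  · subst hN
    intro x hx
    have h0 : ∀ a, Φ.mulVec x a = 0 := fun a => by
      simp [Matrix.mulVec, dotProduct]
    simp [h0]
  rcases Nat.eq_zero_or_pos m with hm0 | hm1
  · exfalso
    have hall : RIP Φ m (ε - 1) := by
      subst hm0
      intro x hx
      have hx0 : ∀ i, x i = 0 := by
        intro i
        by_contra h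
        have hmem : i ∈ Finset.univ.filter fun i => x i ≠ 0 := by simp [h]
        have := Finset.card_pos.2 ⟨i, hmem⟩
        omega
      have hxz : x = 0 := funext hx0
      subst hxz
      simp [Matrix.mulVec_zero]
    have := hε.2 hall
    linarith
  have hrip := hε.1
  -- ε is nonnegative
  have hε0 : 0 ≤ ε := by
    set i0 : Fin N := ⟨0, hN⟩ with hi0
    set e : Fin N → ℂ := fun i => if i = i0 then 1 else 0 with he
    have hesupp : ∀ i ∉ ({i0} : Finset (Fin N)), e i = 0 := by
      intro i hi
      rw [Finset.mem_singleton] at hi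
      simp [he, hi]
    have hsupp : (Finset.univ.filter fun i => e i ≠ 0).card ≤ m := by
      have hsub : (Finset.univ.filter fun i => e i ≠ 0) ⊆ {i0} := by
        intro i hi
        rw [Finset.mem_filter] at hi
        rw [Finset.mem_singleton]
        by_contra h
        exact hi.2 (hesupp i (by rwa [Finset.mem_singleton]))
      calc (Finset.univ.filter fun i => e i ≠ 0).card ≤ ({i0} : Finset (Fin N)).card :=
            Finset.card_le_card hsub
        _ = 1 := Finset.card_singleton _
        _ ≤ m := hm1
    have hQ := quad_support Φ hunit e {i0} hesupp
    rw [Finset.offDiag_singleton] at hQ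
    simp only [Finset.sum_empty, Complex.zero_re, add_zero, Finset.sum_singleton] at hQ
    have he1 : ‖e i0‖ ^ 2 = 1 := by simp [he]
    have hsum : ∑ i, ‖e i‖ ^ 2 = 1 := by
      rw [← Finset.sum_subset (Finset.subset_univ {i0})
        (fun i _ hi => by rw [hesupp i hi]; simp)]
      rw [Finset.sum_singleton, he1]
    obtain ⟨hl, _⟩ := hrip e hsupp
    rw [hsum, hQ, he1] at hl
    linarith
  have hkey : ε * ((k:ℝ) - 1) ≤ δ * ((m:ℝ) - 1) := by
    have hm1R : (1:ℝ) ≤ (m:ℝ) := by exact_mod_cast hm1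
    rcases eq_or_lt_of_le hε0 with h0 | hpos
    · rw [← h0]
      nlinarith
    · have h1 : (k:ℝ) - 1 ≤ ((m:ℝ) - 1) * δ / ε := by linarith
      calc ε * ((k:ℝ) - 1) = ((k:ℝ) - 1) * ε := mul_comm _ _
        _ ≤ (((m:ℝ) - 1) * δ / ε) * ε := mul_le_mul_of_nonneg_right h1 hpos.le
        _ = δ * ((m:ℝ) - 1) := by field_simp
  intro x hx
  set S := Finset.univ.filter fun i => x i ≠ 0 with hSdef
  have hx0 : ∀ i ∉ S, x i = 0 := by
    intro i hi
    rw [hSdef, Finset.mem_filter] at hi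
    push_neg at hi
    exact hi (Finset.mem_univ i)
  have hQ := quad_support Φ hunit x S hx0
  set D := (∑ p ∈ S.offDiag,
      (starRingEnd ℂ) (x p.1) * x p.2 * ∑ a, (starRingEnd ℂ) (Φ a p.1) * Φ a p.2).re with hD
  set Sx := ∑ i ∈ S, ‖x i‖ ^ 2 with hSx
  have hSeq : ∑ i, ‖x i‖ ^ 2 = Sx := by
    rw [hSx, ← Finset.sum_subset (Finset.subset_univ S)
      (fun i _ hi => by rw [hx0 i hi]; simp)]
  have hS0 : 0 ≤ Sx := Finset.sum_nonneg fun i _ => sq_nonneg _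
  have hsk : S.card ≤ k := hx
  suffices hDb : |D| ≤ δ * Sx by
    rw [hSeq, hQ]
    rw [abs_le] at hDb
    constructor <;> nlinarith
  by_cases hsm : S.card ≤ m
  · by_cases hm2 : 2 ≤ m
    · have hεδ : ε ≤ δ := by
        have hmkR : (m:ℝ) ≤ (k:ℝ) := Nat.cast_le.2 hmk
        have hm2R : (2:ℝ) ≤ (m:ℝ) := by exact_mod_cast hm2
        nlinarith
      calc |D| ≤ ε * Sx := rip_offdiag_bound Φ hunit hrip x S hsm
        _ ≤ δ * Sx := mul_le_mul_of_nonneg_right hεδ hS0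
    · have hm1' : m = 1 := by omega
      have hs1 : S.card ≤ 1 := by omega
      have hempty : S.offDiag = ∅ := by
        ext p
        simp only [Finset.mem_offDiag, Finset.notMem_empty, iff_false, not_and]
        intro h1 h2 hne
        exact hne (Finset.card_le_one.mp hs1 _ h1 _ h2)
      rw [hD, hempty]
      simp only [Finset.sum_empty, Complex.zero_re, abs_zero]
      positivity
  · push_neg at hsm
    have hm2 : 2 ≤ m := by
      by_contra h
      have hm1' : m = 1 := by omega
      rw [hm1'] at hkb
      norm_num at hkb
      have hk1 : k ≤ 1 := by exact_mod_cast hkb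
      omega
    have hav := averaging Φ hunit hrip hm2 x S hsm.le
    set s := S.card with hs
    have hs3 : 3 ≤ s := by omega
    have hchoose : (s - 1) * (s - 2).choose (m - 2) = (s - 1).choose (m - 1) * (m - 1) := by
      have h := Nat.add_one_mul_choose_eq (s - 2) (m - 2)
      have h1 : s - 2 + 1 = s - 1 := by omega
      have h2 : m - 2 + 1 = m - 1 := by omega
      simpa [Nat.succ_eq_add_one, h1, h2] using h
    set c2 : ℝ := ((s - 2).choose (m - 2) : ℝ) with hc2
    set c1 : ℝ := ((s - 1).choose (m - 1) : ℝ) with hc1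
    have hc2pos : 0 < c2 := by
      rw [hc2]
      exact_mod_cast Nat.choose_pos (by omega : m - 2 ≤ s - 2)
    have hchooseR : ((s:ℝ) - 1) * c2 = c1 * ((m:ℝ) - 1) := by
      have := congrArg (fun t : ℕ => (t : ℝ)) hchoose
      push_cast [Nat.cast_sub (by omega : 1 ≤ s), Nat.cast_sub (by omega : 1 ≤ m)] at this
      linarith [this]
    have hm1R : (0:ℝ) < (m:ℝ) - 1 := by
      have : (2:ℝ) ≤ (m:ℝ) := by exact_mod_cast hm2
      linarith
    have hskR : (s:ℝ) ≤ (k:ℝ) := Nat.cast_le.2 hsk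
    have key2 : ((m:ℝ) - 1) * (c2 * |D|) ≤ ((m:ℝ) - 1) * (ε * c1 * Sx) :=
      mul_le_mul_of_nonneg_left hav hm1R.le
    have key5 : ε * Sx * (((s:ℝ) - 1) * c2) ≤ δ * ((m:ℝ) - 1) * Sx * c2 := by
      have h1 : ε * ((s:ℝ) - 1) ≤ ε * ((k:ℝ) - 1) :=
        mul_le_mul_of_nonneg_left (by linarith) hε0
      have h3 := mul_le_mul_of_nonneg_right (h1.trans hkey) (mul_nonneg hS0 hc2pos.le)
      linear_combination h3
    have hfin : ((m:ℝ) - 1) * c2 * |D| ≤ ((m:ℝ) - 1) * c2 * (δ * Sx) := by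
      calc ((m:ℝ) - 1) * c2 * |D| = ((m:ℝ) - 1) * (c2 * |D|) := by ring
        _ ≤ ((m:ℝ) - 1) * (ε * c1 * Sx) := key2
        _ = ε * Sx * (c1 * ((m:ℝ) - 1)) := by ring
        _ = ε * Sx * (((s:ℝ) - 1) * c2) := by rw [hchooseR]
        _ ≤ δ * ((m:ℝ) - 1) * Sx * c2 := key5
        _ = ((m:ℝ) - 1) * c2 * (δ * Sx) := by ring
    exact le_of_mul_le_mul_left hfin (mul_pos hm1R hc2pos)
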